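/- If a probability measure μ on an algebra-generated σ-algebra satisfies μ([B_i^θψ]) ∈ {0,1} with value 1 exactly when B_i^θψ ∈ t_i, and t_i is closed under positive introspection (B_i^θψ ∈ t_i iff B_i^1 B_i^θψ ∈ t_i), then the marginal of μ on T_i assigns outer measure 1 to {t_i}; i.e., the marginal of β_i(t_i) on T_i is the point mass δ_{t_i}. -/

import Mathlib

open MeasureTheory ENNReal

/-- The language `L_B^Θ`: primitive propositions, negation, conjunction, and belief
operators `B_i^θ` for `θ ∈ Θ`. -/
inductive Formula (Φ I : Type*) (Θ : Set ℝ≥0∞) : Type _ where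
  | prim : Φ → Formula Φ I Θ
  | neg : Formula Φ I Θ → Formula Φ I Θ
  | conj : Formula Φ I Θ → Formula Φ I Θ → Formula Φ I Θ
  | bel : I → Θ → Formula Φ I Θ → Formula Φ I Θ

/-- Truth sets of formulas in a probability model `(Ω, (Pr_i), π)`. -/
def sem {Ω Φ I : Type*} {Θ : Set ℝ≥0∞} [MeasurableSpace Ω]
    (Pr : I → Ω → Measure Ω) (π : Φ → Set Ω) : Formula Φ I Θ → Set Ω
  | .prim p => π p
  | .neg φ => (sem Pr π φ)ᶜ
  | .conj φ ψ => sem Pr π φ ∩ sem Pr π ψ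
  | .bel i θ φ => {ω | (θ : ℝ≥0∞) ≤ Pr i ω (sem Pr π φ)}

/-- A probability model: a measurable space of worlds, measurable introspective belief
functions `Pr_i : Ω → Δ(Ω)`, and an interpretation `π` of primitive propositions. -/
structure ProbModel (Φ : Type) (n : ℕ) (Θ : Set ℝ≥0∞) where
  Ω : Type
  ms : MeasurableSpace Ω
  Pr : Fin n → Ω → @Measure Ω ms
  prob : ∀ i ω, IsProbabilityMeasure (Pr i ω)
  measPr : ∀ i (E : Set Ω) (θ : ℝ≥0∞), MeasurableSet[ms] E →
    MeasurableSet[ms] {ω | θ ≤ Pr i ω E}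
  π : Φ → Set Ω
  measπ : ∀ p, MeasurableSet[ms] (π p)
  introspect : ∀ i ω,
    (⨅ (E : Set Ω) (_ : {ω' | Pr i ω' = Pr i ω} ⊆ E) (_ : MeasurableSet[ms] E), Pr i ω E) = 1

/-- Truth sets in a (bundled) probability model. -/
def ProbModel.sem {Φ : Type} {n : ℕ} {Θ : Set ℝ≥0∞} (M : ProbModel Φ n Θ) :
    Formula Φ (Fin n) Θ → Set M.Ω :=
  @_root_.sem M.Ω Φ (Fin n) Θ M.ms M.Pr M.π

/-- Purely propositional formulas: Boolean combinations of primitive propositions. -/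
inductive IsProp {Φ I : Type*} {Θ : Set ℝ≥0∞} : Formula Φ I Θ → Prop where
  | prim (p : Φ) : IsProp (.prim p)
  | neg {φ} : IsProp φ → IsProp (.neg φ)
  | conj {φ ψ} : IsProp φ → IsProp ψ → IsProp (.conj φ ψ)

/-- `i`-formulas: Boolean combinations of formulas of the form `B_i^θ ψ`. -/
inductive IsIFormula {Φ I : Type*} {Θ : Set ℝ≥0∞} (i : I) : Formula Φ I Θ → Prop where
  | bel (θ : Θ) (φ : Formula Φ I Θ) : IsIFormula i (.bel i θ φ)
  | neg {φ} : IsIFormula i φ → IsIFormula i (.neg φ)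
  | conj {φ ψ} : IsIFormula i φ → IsIFormula i ψ → IsIFormula i (.conj φ ψ)

/-- The `0`-description of a world: all purely propositional formulas true at it. -/
def d0 {Φ : Type} {n : ℕ} {Θ : Set ℝ≥0∞} (M : ProbModel Φ n Θ) (ω : M.Ω) :
    Set (Formula Φ (Fin n) Θ) :=
  {φ | IsProp φ ∧ ω ∈ M.sem φ}

/-- The `i`-description of a world: all `i`-formulas true at it. -/
def di {Φ : Type} {n : ℕ} {Θ : Set ℝ≥0∞} (M : ProbModel Φ n Θ) (i : Fin n) (ω : M.Ω) :
    Set (Formula Φ (Fin n) Θ) :=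
  {φ | IsIFormula i φ ∧ ω ∈ M.sem φ}

/-- `ω` satisfies every formula in `S`. -/
def SatAll {Φ : Type} {n : ℕ} {Θ : Set ℝ≥0∞} (M : ProbModel Φ n Θ) (ω : M.Ω)
    (S : Set (Formula Φ (Fin n) Θ)) : Prop :=
  ∀ φ ∈ S, ω ∈ M.sem φ

/-- Semantic entailment: every world of every probability model satisfying all of `S`
satisfies `φ`. -/
def Entails {Φ : Type} {n : ℕ} {Θ : Set ℝ≥0∞} (S : Set (Formula Φ (Fin n) Θ))
    (φ : Formula Φ (Fin n) Θ) : Prop :=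
  ∀ (M : ProbModel Φ n Θ) (ω : M.Ω), SatAll M ω S → ω ∈ M.sem φ

/-- A description: a satisfiable and maximal set of formulas. -/
def IsDescription {Φ : Type} {n : ℕ} {Θ : Set ℝ≥0∞} (D : Set (Formula Φ (Fin n) Θ)) : Prop :=
  (∃ (M : ProbModel Φ n Θ) (ω : M.Ω), SatAll M ω D) ∧
    ∀ φ : Formula Φ (Fin n) Θ, φ ∈ D ∨ Formula.neg φ ∈ D

variable {Φ : Type} {n : ℕ} {Θ : Set ℝ≥0∞}

/-- The space `X` of 0-descriptions arising from worlds of `M`. -/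
def Desc0 (M : ProbModel Φ n Θ) : Type :=
  {x : Set (Formula Φ (Fin n) Θ) // ∃ ω : M.Ω, x = d0 M ω}

/-- The space `T_i` of `i`-descriptions arising from worlds of `M`. -/
def DescI (M : ProbModel Φ n Θ) (i : Fin n) : Type :=
  {t : Set (Formula Φ (Fin n) Θ) // ∃ ω : M.Ω, t = di M i ω}

/-- `E_0(φ) = {x : φ ∈ x}`. -/
def E0 (M : ProbModel Φ n Θ) (φ : Formula Φ (Fin n) Θ) : Set (Desc0 M) :=
  {x | φ ∈ x.1}

/-- `E_i(φ) = {t_i : φ ∈ t_i}`. -/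
def Ei (M : ProbModel Φ n Θ) (i : Fin n) (φ : Formula Φ (Fin n) Θ) : Set (DescI M i) :=
  {t | φ ∈ t.1}

instance (M : ProbModel Φ n Θ) : MeasurableSpace (Desc0 M) :=
  MeasurableSpace.generateFrom {s | ∃ φ, s = E0 M φ}

instance (M : ProbModel Φ n Θ) (i : Fin n) : MeasurableSpace (DescI M i) :=
  MeasurableSpace.generateFrom {s | ∃ φ, s = Ei M i φ}

/-- `[φ] = {(x,t) : φ ∈ D(x,t)}`, where `D(x,t)` is the unique description extending
`x ∪ ⋃_i t_i`; membership in `D(x,t)` is equivalently expressed by entailment. -/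
def brack (M : ProbModel Φ n Θ) (φ : Formula Φ (Fin n) Θ) :
    Set (Desc0 M × ∀ i, DescI M i) :=
  {q | Entails (q.1.1 ∪ ⋃ i : Fin n, (q.2 i).1) φ}

/-- The outer measure induced by `μ`: the infimum of `μ E` over measurable `E ⊇ A`. -/
noncomputable def outerOf {X : Type*} [MeasurableSpace X] (μ : Measure X) (A : Set X) : ℝ≥0∞ :=
  ⨅ (E : Set X) (_ : A ⊆ E) (_ : MeasurableSet E), μ E

section Aux
variable {Φ : Type} {n : ℕ} {Θ : Set ℝ≥0∞}

lemma measP (M : ProbModel Φ n Θ) (i : Fin n) (φ : Formula Φ (Fin n) Θ) :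
    MeasurableSet {q : Desc0 M × ∀ j, DescI M j | φ ∈ (q.2 i).1} := by
  have h : {q : Desc0 M × ∀ j, DescI M j | φ ∈ (q.2 i).1}
      = (fun q : Desc0 M × ∀ j, DescI M j => q.2 i) ⁻¹' (Ei M i φ) := rfl
  rw [h]
  exact ((measurable_pi_apply i).comp measurable_snd)
    (MeasurableSpace.measurableSet_generateFrom ⟨φ, rfl⟩)

lemma neg_mem_di_iff (M : ProbModel Φ n Θ) (i : Fin n) (ω' : M.Ω)
    {φ : Formula Φ (Fin n) Θ} (hφ : IsIFormula i φ) :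
    Formula.neg φ ∈ di M i ω' ↔ φ ∉ di M i ω' := by
  constructor
  · rintro ⟨-, h⟩ ⟨-, h'⟩; exact h h'
  · intro h; exact ⟨hφ.neg, fun h' => h ⟨hφ, h'⟩⟩

lemma conj_mem_di_iff (M : ProbModel Φ n Θ) (i : Fin n) (ω' : M.Ω)
    {φ ψ : Formula Φ (Fin n) Θ} (hφ : IsIFormula i φ) (hψ : IsIFormula i ψ) :
    Formula.conj φ ψ ∈ di M i ω' ↔ (φ ∈ di M i ω' ∧ ψ ∈ di M i ω') := by
  constructor
  · rintro ⟨-, h⟩; exact ⟨⟨hφ, h.1⟩, ⟨hψ, h.2⟩⟩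
  · rintro ⟨⟨-, h1⟩, ⟨-, h2⟩⟩; exact ⟨hφ.conj hψ, h1, h2⟩

lemma stmt18key (M : ProbModel Φ n Θ) (i : Fin n) (ω : M.Ω)
    (μ : Measure (Desc0 M × ∀ j, DescI M j)) (hμ : IsProbabilityMeasure μ)
    (h1 : (1 : ℝ≥0∞) ∈ Θ)
    (hval : ∀ (θ : Θ) (ψ : Formula Φ (Fin n) Θ),
      μ (brack M (Formula.bel i θ ψ)) = 1 ↔ Formula.bel i θ ψ ∈ di M i ω)
    (h01 : ∀ (θ : Θ) (ψ : Formula Φ (Fin n) Θ),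
      μ (brack M (Formula.bel i θ ψ)) = 0 ∨ μ (brack M (Formula.bel i θ ψ)) = 1)
    (φ : Formula Φ (Fin n) Θ) :
    (μ {q : Desc0 M × ∀ j, DescI M j | φ ∈ (q.2 i).1} = 0 ∨
      μ {q : Desc0 M × ∀ j, DescI M j | φ ∈ (q.2 i).1} = 1) ∧
    (φ ∈ di M i ω ↔ μ {q : Desc0 M × ∀ j, DescI M j | φ ∈ (q.2 i).1} = 1) := by
  by_cases hi : IsIFormula i φ
  · induction hi with
    | bel θ ψ =>
      -- the contradiction formula
      set χ : Formula Φ (Fin n) Θ := Formula.conj ψ (Formula.neg ψ) with hχ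
      have hsemχ : M.sem χ = ∅ := by
        show M.sem ψ ∩ (M.sem ψ)ᶜ = ∅
        exact Set.inter_compl_self _
      have hnot : Formula.bel i (⟨1, h1⟩ : Θ) χ ∉ di M i ω := by
        rintro ⟨-, h⟩
        have h' : (1 : ℝ≥0∞) ≤ M.Pr i ω (M.sem χ) := h
        rw [hsemχ, measure_empty] at h'
        simp at h'
      have hU0 : μ (brack M (Formula.bel i (⟨1, h1⟩ : Θ) χ)) = 0 :=
        (h01 _ _).resolve_right (fun h => hnot ((hval _ _).mp h))
      have hsub1 : {q : Desc0 M × ∀ j, DescI M j | Formula.bel i θ ψ ∈ (q.2 i).1}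
          ⊆ brack M (Formula.bel i θ ψ) := by
        intro q hq M' ω' hsat
        exact hsat _ (Set.mem_union_right _ (Set.mem_iUnion.2 ⟨i, hq⟩))
      have hsub2 : brack M (Formula.bel i θ ψ)
          ⊆ {q : Desc0 M × ∀ j, DescI M j | Formula.bel i θ ψ ∈ (q.2 i).1}
            ∪ brack M (Formula.bel i (⟨1, h1⟩ : Θ) χ) := by
        intro q hq
        by_cases hmem : Formula.bel i θ ψ ∈ (q.2 i).1
        · exact Or.inl hmem
        · right
          obtain ⟨ω1, hω1⟩ := (q.2 i).2
          rw [hω1] at hmem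
          have hneg : Formula.neg (Formula.bel i θ ψ) ∈ (q.2 i).1 := by
            rw [hω1]
            exact (neg_mem_di_iff M i ω1 (IsIFormula.bel θ ψ)).2 hmem
          intro M' ω' hsat
          exfalso
          have hn := hsat _ (Set.mem_union_right _ (Set.mem_iUnion.2 ⟨i, hneg⟩))
          exact hn (hq M' ω' hsat)
      have heq : μ {q : Desc0 M × ∀ j, DescI M j | Formula.bel i θ ψ ∈ (q.2 i).1}
          = μ (brack M (Formula.bel i θ ψ)) := by
        refine le_antisymm (measure_mono hsub1) ?_
        calc μ (brack M (Formula.bel i θ ψ))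
            ≤ μ ({q : Desc0 M × ∀ j, DescI M j | Formula.bel i θ ψ ∈ (q.2 i).1}
              ∪ brack M (Formula.bel i (⟨1, h1⟩ : Θ) χ)) := measure_mono hsub2
          _ ≤ μ {q : Desc0 M × ∀ j, DescI M j | Formula.bel i θ ψ ∈ (q.2 i).1}
              + μ (brack M (Formula.bel i (⟨1, h1⟩ : Θ) χ)) := measure_union_le _ _
          _ = μ {q : Desc0 M × ∀ j, DescI M j | Formula.bel i θ ψ ∈ (q.2 i).1} := by
              rw [hU0, add_zero]
      rw [heq]
      exact ⟨h01 θ ψ, (hval θ ψ).symm⟩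
    | @neg φ hφ ih =>
      obtain ⟨h01φ, hiffφ⟩ := ih
      have hc : {q : Desc0 M × ∀ j, DescI M j | Formula.neg φ ∈ (q.2 i).1}
          = {q : Desc0 M × ∀ j, DescI M j | φ ∈ (q.2 i).1}ᶜ := by
        ext q
        obtain ⟨ω1, hω1⟩ := (q.2 i).2
        simp only [Set.mem_setOf_eq, Set.mem_compl_iff, hω1]
        exact neg_mem_di_iff M i ω1 hφ
      rw [hc, prob_compl_eq_one_sub (measP M i φ), neg_mem_di_iff M i ω hφ, hiffφ]
      rcases h01φ with h | h <;> simp [h]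
    | @conj φ ψ hφ hψ ihφ ihψ =>
      obtain ⟨h01φ, hiffφ⟩ := ihφ
      obtain ⟨h01ψ, hiffψ⟩ := ihψ
      have hc : {q : Desc0 M × ∀ j, DescI M j | Formula.conj φ ψ ∈ (q.2 i).1}
          = {q : Desc0 M × ∀ j, DescI M j | φ ∈ (q.2 i).1}
            ∩ {q : Desc0 M × ∀ j, DescI M j | ψ ∈ (q.2 i).1} := by
        ext q
        obtain ⟨ω1, hω1⟩ := (q.2 i).2
        simp only [Set.mem_setOf_eq, Set.mem_inter_iff, hω1]
        exact conj_mem_di_iff M i ω1 hφ hψ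
      set A := {q : Desc0 M × ∀ j, DescI M j | φ ∈ (q.2 i).1} with hA
      set B := {q : Desc0 M × ∀ j, DescI M j | ψ ∈ (q.2 i).1} with hB
      have hinter : μ (A ∩ B) = 1 ↔ (μ A = 1 ∧ μ B = 1) := by
        constructor
        · intro h
          constructor
          · exact le_antisymm prob_le_one (h ▸ measure_mono Set.inter_subset_left)
          · exact le_antisymm prob_le_one (h ▸ measure_mono Set.inter_subset_right)
        · rintro ⟨hA1, hB1⟩
          have hcz : μ ((A ∩ B)ᶜ) = 0 := by
            rw [Set.compl_inter]
            refine le_antisymm (le_trans (measure_union_le _ _) ?_) (zero_le)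
            rw [prob_compl_eq_one_sub (measP M i φ), prob_compl_eq_one_sub (measP M i ψ),
              hA1, hB1, tsub_self, add_zero]
          have := prob_compl_eq_one_sub (μ := μ) ((measP M i φ).inter (measP M i ψ))
          rw [hcz] at this
          have hle : (1 : ℝ≥0∞) ≤ μ (A ∩ B) := tsub_eq_zero_iff_le.1 this.symm
          exact le_antisymm prob_le_one hle
      rw [hc, conj_mem_di_iff M i ω hφ hψ, hiffφ, hiffψ, hinter]
      refine ⟨?_, Iff.rfl⟩
      rcases h01φ with h | h
      · left
        refine le_antisymm ?_ (zero_le)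
        exact h ▸ measure_mono Set.inter_subset_left
      · rcases h01ψ with h' | h'
        · left
          refine le_antisymm ?_ (zero_le)
          exact h' ▸ measure_mono Set.inter_subset_right
        · exact Or.inr ⟨h, h'⟩
  · have hempty : {q : Desc0 M × ∀ j, DescI M j | φ ∈ (q.2 i).1} = ∅ := by
      ext q
      obtain ⟨ω1, hω1⟩ := (q.2 i).2
      simp only [Set.mem_setOf_eq, Set.mem_empty_iff_false, iff_false, hω1]
      rintro ⟨h, -⟩
      exact hi h
    have hnot : φ ∉ di M i ω := fun h => hi h.1
    rw [hempty, measure_empty]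
    exact ⟨Or.inl rfl, by simp [hnot]⟩

end Aux

/-- If `μ([B_i^θψ]) ∈ {0,1}` with value 1 exactly when `B_i^θψ ∈ t_i`, and `t_i` is
closed under positive introspection, then the marginal of `μ` on `T_i` assigns outer
measure 1 to `{t_i}`; i.e., it is the point mass `δ_{t_i}`. -/
theorem stmt18 (M : ProbModel Φ n Θ) (i : Fin n) (ω : M.Ω)
    (μ : Measure (Desc0 M × ∀ j, DescI M j)) (hμ : IsProbabilityMeasure μ)
    (h1 : (1 : ℝ≥0∞) ∈ Θ)
    (hval : ∀ (θ : Θ) (ψ : Formula Φ (Fin n) Θ),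
      μ (brack M (Formula.bel i θ ψ)) = 1 ↔ Formula.bel i θ ψ ∈ di M i ω)
    (h01 : ∀ (θ : Θ) (ψ : Formula Φ (Fin n) Θ),
      μ (brack M (Formula.bel i θ ψ)) = 0 ∨ μ (brack M (Formula.bel i θ ψ)) = 1)
    (hpos : ∀ (θ : Θ) (ψ : Formula Φ (Fin n) Θ),
      Formula.bel i θ ψ ∈ di M i ω ↔
        Formula.bel i (⟨1, h1⟩ : Θ) (Formula.bel i θ ψ) ∈ di M i ω) :
    outerOf (Measure.map (fun q : Desc0 M × ∀ j, DescI M j => q.2 i) μ)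
      {(⟨di M i ω, ⟨ω, rfl⟩⟩ : DescI M i)} = 1 := by
  classical
  set proj : (Desc0 M × ∀ j, DescI M j) → DescI M i := fun q => q.2 i with hprojdef
  have hproj : Measurable proj := (measurable_pi_apply i).comp measurable_snd
  set ti : DescI M i := ⟨di M i ω, ⟨ω, rfl⟩⟩ with hti
  have key := stmt18key M i ω μ hμ h1 hval h01
  have hall : ∀ (E : Set (DescI M i)), MeasurableSet E →
      (μ (proj ⁻¹' E) = 0 ∨ μ (proj ⁻¹' E) = 1) ∧ (ti ∈ E ↔ μ (proj ⁻¹' E) = 1) := by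
    intro E hE
    refine MeasurableSpace.generateFrom_induction {s | ∃ φ, s = Ei M i φ}
      (fun s _ => (μ (proj ⁻¹' s) = 0 ∨ μ (proj ⁻¹' s) = 1) ∧ (ti ∈ s ↔ μ (proj ⁻¹' s) = 1))
      ?_ ?_ ?_ ?_ E hE
    · rintro t ⟨φ, rfl⟩ -
      have hpre : proj ⁻¹' Ei M i φ = {q : Desc0 M × ∀ j, DescI M j | φ ∈ (q.2 i).1} := rfl
      rw [hpre]
      exact ⟨(key φ).1, (key φ).2⟩
    · simp
    · rintro t ht ⟨h01t, hiff⟩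
      have hmeas : MeasurableSet (proj ⁻¹' t) := hproj ht
      rw [Set.preimage_compl, prob_compl_eq_one_sub hmeas, Set.mem_compl_iff, hiff]
      rcases h01t with h | h <;> simp [h]
    · intro s hs hp
      rw [Set.preimage_iUnion]
      by_cases hex : ∃ m, ti ∈ s m
      · obtain ⟨m, hm⟩ := hex
        have h1' : μ (proj ⁻¹' s m) = 1 := (hp m).2.mp hm
        have : μ (⋃ m, proj ⁻¹' s m) = 1 :=
          le_antisymm prob_le_one (h1' ▸ measure_mono (Set.subset_iUnion (fun m => proj ⁻¹' s m) m))
        rw [this]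
        exact ⟨Or.inr rfl, by simpa using ⟨m, hm⟩⟩
      · push_neg at hex
        have h0 : ∀ m, μ (proj ⁻¹' s m) = 0 := fun m =>
          (hp m).1.resolve_right (fun h => hex m ((hp m).2.mpr h))
        have : μ (⋃ m, proj ⁻¹' s m) = 0 := by
          refine le_antisymm (le_trans (measure_iUnion_le _) ?_) (zero_le)
          simp [h0]
        rw [this]
        refine ⟨Or.inl rfl, ?_⟩
        simp only [Set.mem_iUnion]
        constructor
        · rintro ⟨m, hm⟩; exact absurd hm (hex m)
        · intro h; exact absurd h zero_ne_one
  have hone : ∀ (E : Set (DescI M i)), MeasurableSet E → ti ∈ E →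
      (Measure.map proj μ) E = 1 := by
    intro E hE hmem
    rw [Measure.map_apply hproj hE]
    exact ((hall E hE).2).mp hmem
  refine le_antisymm ?_ ?_
  · refine le_trans (iInf_le_of_le Set.univ (iInf_le_of_le (Set.subset_univ _)
      (iInf_le_of_le MeasurableSet.univ le_rfl))) ?_
    rw [hone Set.univ MeasurableSet.univ trivial]
  · refine le_iInf fun E => le_iInf fun hsub => le_iInf fun hE => ?_
    rw [hone E hE (hsub rfl)]
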